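/- arXiv:0906.0555 — 2 statements merged into one kernel-verified Lean document; each statement's English description precedes it below -/
import Mathlib

section
/- (Existence of a low-multiplicity line) Let L be a finite nonempty set of lines in ℝ^n with a nonempty set of joints J. Then there exists a line ℓ ∈ L such that the number of joints of L lying on ℓ is at most K·|J|^(1/n), where K is a constant depending only on n. -/
open MvPolynomial

/-- A line in ℝⁿ, given by a base point and a nonzero direction vector. -/
structure Line (n : ℕ) where
  p : Fin n → ℝ
  v : Fin n → ℝ
  hv : v ≠ 0

/-- The set of points of a line. -/
def Line.carrier {n : ℕ} (ℓ : Line n) : Set (Fin n → ℝ) :=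
  {x | ∃ t : ℝ, x = ℓ.p + t • ℓ.v}

/-- `x` is a joint of the collection of lines `L`: it lies on `n` lines of `L`
whose directions are linearly independent. -/
def IsJoint {n : ℕ} (L : Finset (Line n)) (x : Fin n → ℝ) : Prop :=
  ∃ f : Fin n → Line n, (∀ i, f i ∈ L) ∧ (∀ i, x ∈ (f i).carrier) ∧
    LinearIndependent ℝ (fun i => (f i).v)

/-- The set of joints of `L`. -/
def joints {n : ℕ} (L : Finset (Line n)) : Set (Fin n → ℝ) :=
  {x | IsJoint L x}


noncomputable section AuxPoly

variable {n : ℕ}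

/-- Substituting `x + t v` into a multivariate polynomial, as a univariate polynomial in `t`. -/
def restrictPoly (x v : Fin n → ℝ) (p : MvPolynomial (Fin n) ℝ) : Polynomial ℝ :=
  aeval (fun i => Polynomial.C (x i) + Polynomial.X * Polynomial.C (v i)) p

lemma eval_restrictPoly (x v : Fin n → ℝ) (p : MvPolynomial (Fin n) ℝ) (t : ℝ) :
    (restrictPoly x v p).eval t = eval (x + t • v) p := by
  have h := congrFun (congrArg DFunLike.coe
    (MvPolynomial.comp_aeval (f := fun i => Polynomial.C (x i) + Polynomial.X * Polynomial.C (v i))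
      (φ := Polynomial.aeval t))) p
  simp only [AlgHom.coe_comp, Function.comp_apply] at h
  rw [show (restrictPoly x v p).eval t = (Polynomial.aeval t) (restrictPoly x v p) from
    (congrFun (Polynomial.coe_aeval_eq_eval t) _).symm, restrictPoly, h]
  have hfun : (fun i => (Polynomial.aeval t)
      (Polynomial.C (x i) + Polynomial.X * Polynomial.C (v i))) = x + t • v := by
    funext i; simp; ring
  rw [hfun, ← MvPolynomial.coe_aeval_eq_eval]
  rfl

lemma natDegree_restrictPoly_le (x v : Fin n → ℝ) (p : MvPolynomial (Fin n) ℝ) :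
    (restrictPoly x v p).natDegree ≤ p.totalDegree := by
  rw [restrictPoly, aeval_def, eval₂_eq]
  refine (Polynomial.natDegree_sum_le _ _).trans ?_
  rw [Finset.fold_max_le]
  refine ⟨Nat.zero_le _, fun d hd => ?_⟩
  refine (Polynomial.natDegree_mul_le).trans ?_
  refine le_trans (add_le_add (le_of_eq (Polynomial.natDegree_C _))
    (Polynomial.natDegree_prod_le _ _)) ?_
  rw [zero_add]
  calc ∑ i ∈ d.support, ((Polynomial.C (x i) + Polynomial.X * Polynomial.C (v i)) ^ d i).natDegree
      ≤ ∑ i ∈ d.support, d i := by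
        refine Finset.sum_le_sum (fun i _ => le_trans Polynomial.natDegree_pow_le ?_)
        have h1 : (Polynomial.C (x i) + Polynomial.X * Polynomial.C (v i)).natDegree ≤ 1 :=
          (Polynomial.natDegree_add_le _ _).trans (max_le (by simp) (le_trans Polynomial.natDegree_mul_le (by simp)))
        calc d i * (Polynomial.C (x i) + Polynomial.X * Polynomial.C (v i)).natDegree
            ≤ d i * 1 := Nat.mul_le_mul_left _ h1
          _ = d i := mul_one _
    _ ≤ p.totalDegree := le_totalDegree hd

end AuxPoly

noncomputable section AuxCoeff
variable {n : ℕ}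

lemma coeff_zero_restrictPoly (x v : Fin n → ℝ) (p : MvPolynomial (Fin n) ℝ) :
    (restrictPoly x v p).coeff 0 = eval x p := by
  rw [Polynomial.coeff_zero_eq_eval_zero, eval_restrictPoly]
  simp

lemma coeff_one_restrictPoly (x v : Fin n → ℝ) (p : MvPolynomial (Fin n) ℝ) :
    (restrictPoly x v p).coeff 1 = ∑ i, v i * eval x (pderiv i p) := by
  induction p using MvPolynomial.induction_on with
  | C a => simp [restrictPoly]
  | add p q hp hq =>
      simp only [restrictPoly, map_add, Polynomial.coeff_add] at *
      rw [hp, hq, ← Finset.sum_add_distrib]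
      simp [mul_add]
  | mul_X q i hq =>
    classical
    have hres : restrictPoly x v (q * X i)
        = restrictPoly x v q * (Polynomial.C (x i) + Polynomial.X * Polynomial.C (v i)) := by
      simp [restrictPoly]
    have h1 : (restrictPoly x v (q * X i)).coeff 1
        = (restrictPoly x v q).coeff 1 * x i + (restrictPoly x v q).coeff 0 * v i := by
      rw [hres, mul_add, mul_comm Polynomial.X (Polynomial.C (v i)), ← mul_assoc,
        Polynomial.coeff_add, Polynomial.coeff_mul_C]
      rw [show (1 : ℕ) = 0 + 1 from rfl, Polynomial.coeff_mul_X, Polynomial.coeff_mul_C]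
    rw [h1, hq, coeff_zero_restrictPoly]
    have hterm : ∀ j : Fin n, v j * eval x (pderiv j (q * X i))
        = v j * eval x (pderiv j q) * x i + (if i = j then v j * eval x q else 0) := by
      intro j
      rw [pderiv_mul, pderiv_X]
      by_cases h : i = j
      · subst h; simp [Pi.single_eq_same]; ring
      · simp [Pi.single_eq_of_ne' h, h]; ring
    rw [Finset.sum_congr rfl (fun j _ => hterm j), Finset.sum_add_distrib,
      Finset.sum_ite_eq, Finset.sum_mul]
    simp [mul_comm]

end AuxCoeff

noncomputable section AuxPderiv
variable {n : ℕ}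

lemma coeff_pderiv' (i : Fin n) (d : Fin n →₀ ℕ) (p : MvPolynomial (Fin n) ℝ) :
    coeff d (pderiv i p) = (d i + 1 : ℝ) * coeff (d + Finsupp.single i 1) p := by
  classical
  induction p using MvPolynomial.induction_on' with
  | add p q hp hq => simp [map_add, coeff_add, hp, hq, mul_add]
  | monomial s a =>
      rw [pderiv_monomial, coeff_monomial, coeff_monomial]
      by_cases h : s = d + Finsupp.single i 1
      · subst h
        rw [if_pos (add_tsub_cancel_right _ _)]
        have : (d + (Finsupp.single i 1 : Fin n →₀ ℕ)) i = d i + 1 := by simp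
        rw [this]
        push_cast
        simp only [if_true]
        ring
      · rw [if_neg h, mul_zero]
        by_cases h2 : s - Finsupp.single i 1 = d
        · have hsi : s i = 0 := by
            by_contra hsi
            exact h (by rw [← h2, tsub_add_cancel_of_le
              (Finsupp.single_le_iff.mpr (Nat.one_le_iff_ne_zero.mpr hsi))])
          rw [if_pos h2, hsi]
          simp
        · rw [if_neg h2]

lemma exists_pderiv_ne_zero {p : MvPolynomial (Fin n) ℝ} (hp : p ≠ 0)
    (hdeg : 0 < p.totalDegree) : ∃ i, pderiv i p ≠ 0 := by
  obtain ⟨d, hd, hsum⟩ : ∃ d ∈ p.support, (d.sum fun _ e => e) = p.totalDegree := by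
    obtain ⟨d, hd, h⟩ := Finset.exists_mem_eq_sup p.support
      (support_nonempty.mpr hp) (fun s : Fin n →₀ ℕ => s.sum fun _ e => e)
    exact ⟨d, hd, h.symm⟩
  obtain ⟨i, hi⟩ : ∃ i, d i ≠ 0 := by
    by_contra h
    push_neg at h
    rw [show d = 0 from Finsupp.ext h] at hsum
    simp at hsum
    omega
  refine ⟨i, fun h0 => ?_⟩
  have hco := coeff_pderiv' i (d - Finsupp.single i 1) p
  rw [h0, coeff_zero, tsub_add_cancel_of_le
    (Finsupp.single_le_iff.mpr (Nat.one_le_iff_ne_zero.mpr hi))] at hco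
  have hne : (((d - (Finsupp.single i 1 : Fin n →₀ ℕ)) i : ℝ) + 1) ≠ 0 := by positivity
  exact (mem_support_iff.mp hd) (by
    rcases mul_eq_zero.mp hco.symm with h | h
    · exact absurd h hne
    · exact h)

lemma totalDegree_pderiv_lt {p : MvPolynomial (Fin n) ℝ} (hdeg : 0 < p.totalDegree)
    (i : Fin n) : (pderiv i p).totalDegree < p.totalDegree := by
  rw [totalDegree]
  refine (Finset.sup_lt_iff (by simpa using hdeg)).mpr ?_
  intro d hd
  have hc : coeff d (pderiv i p) ≠ 0 := mem_support_iff.mp hd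
  rw [coeff_pderiv'] at hc
  have h2 : coeff (d + Finsupp.single i 1) p ≠ 0 := fun h => hc (by simp [h])
  have h3 := le_totalDegree (mem_support_iff.mpr h2)
  have hsum : ((d + Finsupp.single i 1).sum fun _ e => e) = (d.sum fun _ e => e) + 1 := by
    rw [Finsupp.sum_add_index' (fun _ => rfl) (fun _ _ _ => rfl),
      Finsupp.sum_single_index rfl]
  omega

end AuxPderiv

noncomputable section AuxExists
variable {n : ℕ}

def expFinsupp {m : ℕ} (e : Fin n → Fin m) : Fin n →₀ ℕ :=
  Finsupp.equivFunOnFinite.symm (fun i => (e i : ℕ))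

lemma expFinsupp_apply {m : ℕ} (e : Fin n → Fin m) (i : Fin n) :
    expFinsupp e i = (e i : ℕ) := rfl

lemma expFinsupp_inj {m : ℕ} : Function.Injective (expFinsupp (n := n) (m := m)) := by
  intro a b h
  funext i
  exact Fin.val_injective (congrFun (congrArg (fun f : Fin n →₀ ℕ => (f : Fin n → ℕ)) h) i)

lemma exists_vanishing (S : Finset (Fin n → ℝ)) (m : ℕ) (hm : S.card < m ^ n) :
    ∃ p : MvPolynomial (Fin n) ℝ, p ≠ 0 ∧ p.totalDegree ≤ n * m ∧ ∀ x ∈ S, eval x p = 0 := by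
  classical
  let Φ : ((Fin n → Fin m) → ℝ) →ₗ[ℝ] ({x // x ∈ S} → ℝ) :=
    { toFun := fun c => fun x => ∑ e : Fin n → Fin m, c e * ∏ i, (x : Fin n → ℝ) i ^ (e i : ℕ)
      map_add' := by intro a b; funext x; simp [add_mul, Finset.sum_add_distrib]
      map_smul' := by intro r a; funext x; simp [Finset.mul_sum, mul_assoc] }
  have hker : ∃ c : (Fin n → Fin m) → ℝ, c ≠ 0 ∧ Φ c = 0 := by
    by_contra hcon
    push_neg at hcon
    have hinj : Function.Injective Φ := by
      rw [← LinearMap.ker_eq_bot, Submodule.eq_bot_iff]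
      intro c hc
      by_contra hc0
      exact hcon c hc0 hc
    have hle := LinearMap.finrank_le_finrank_of_injective hinj
    rw [Module.finrank_pi, Module.finrank_pi, Fintype.card_fun, Fintype.card_fin,
      Fintype.card_fin, Fintype.card_coe] at hle
    omega
  obtain ⟨c, hc0, hc⟩ := hker
  obtain ⟨e₀, he₀⟩ := Function.ne_iff.mp hc0
  refine ⟨∑ e : Fin n → Fin m, monomial (expFinsupp e) (c e), ?_, ?_, ?_⟩
  · intro hzero
    have : coeff (expFinsupp e₀) (∑ e : Fin n → Fin m, monomial (expFinsupp e) (c e)) = c e₀ := by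
      rw [coeff_sum]
      rw [Finset.sum_eq_single e₀]
      · simp [coeff_monomial]
      · intro b _ hb
        rw [coeff_monomial, if_neg (fun h => hb (expFinsupp_inj h))]
      · simp
    rw [hzero] at this
    simp at this
    exact he₀ this.symm
  · refine (totalDegree_finset_sum _ _).trans (Finset.sup_le fun e _ => ?_)
    refine (totalDegree_monomial_le _ _).trans ?_
    rw [Finsupp.sum_fintype _ _ (fun _ => rfl)]
    calc ∑ i, id (expFinsupp e i) ≤ ∑ _i : Fin n, m :=
          Finset.sum_le_sum (fun i _ => le_of_lt (by simpa [expFinsupp_apply] using (e i).isLt))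
      _ = n * m := by simp [Finset.sum_const, mul_comm]
  · intro x hx
    have := congrFun hc ⟨x, hx⟩
    simp only [Φ, LinearMap.coe_mk, AddHom.coe_mk, Pi.zero_apply] at this
    rw [map_sum]
    rw [← this]
    refine Finset.sum_congr rfl fun e _ => ?_
    rw [eval_monomial, Finsupp.prod_pow]
    simp [expFinsupp_apply, mul_comm]

end AuxExists
section Geom
variable {n : ℕ}

lemma pair_inter_subsingleton {ℓ₁ ℓ₂ : Line n}
    (h : LinearIndependent ℝ ![ℓ₁.v, ℓ₂.v]) :
    (ℓ₁.carrier ∩ ℓ₂.carrier).Subsingleton := by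
  rintro x ⟨⟨t, rfl⟩, ⟨s, hx2⟩⟩ y ⟨⟨t', hy1⟩, ⟨s', hy2⟩⟩
  have e1 : (ℓ₁.p + t • ℓ₁.v) - y = (t - t') • ℓ₁.v := by rw [hy1]; module
  have e2 : (ℓ₁.p + t • ℓ₁.v) - y = (s - s') • ℓ₂.v := by rw [hx2, hy2]; module
  have e12 : (t - t') • ℓ₁.v = (s - s') • ℓ₂.v := e1.symm.trans e2
  have h0 : ∑ i : Fin 2, (![t - t', -(s - s')] i) • (![ℓ₁.v, ℓ₂.v] i) = 0 := by
    rw [Fin.sum_univ_two]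
    simp only [Matrix.cons_val_zero, Matrix.cons_val_one, Matrix.head_cons]
    rw [e12]
    module
  have ht := Fintype.linearIndependent_iff.mp h ![t - t', -(s - s')] h0 0
  simp only [Matrix.cons_val_zero] at ht
  rw [hy1, show t = t' from by linarith [sub_eq_zero.mp ht]]

lemma joints_finite (hn : 2 ≤ n) (L : Finset (Line n)) : (joints L).Finite := by
  have hsub : joints L ⊆ ⋃ ℓ₁ ∈ L, ⋃ ℓ₂ ∈ L,
      {x | (x ∈ ℓ₁.carrier ∩ ℓ₂.carrier) ∧ LinearIndependent ℝ ![ℓ₁.v, ℓ₂.v]} := by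
    intro x hx
    obtain ⟨f, hfL, hfx, hind⟩ := hx
    have i0 : Fin n := ⟨0, by omega⟩
    set j0 : Fin n := ⟨0, by omega⟩ with hj0
    set j1 : Fin n := ⟨1, by omega⟩ with hj1
    have hcomp : LinearIndependent ℝ (fun j : Fin 2 => (f (![j0, j1] j)).v) := by
      refine hind.comp ![j0, j1] ?_
      intro a b hab
      fin_cases a <;> fin_cases b <;> simp_all [hj0, hj1, Fin.ext_iff]
    have hpair : LinearIndependent ℝ ![(f j0).v, (f j1).v] := by
      convert hcomp using 1
      funext j; fin_cases j <;> rfl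
    refine Set.mem_biUnion (hfL j0) (Set.mem_biUnion (hfL j1) ?_)
    exact ⟨⟨hfx j0, hfx j1⟩, hpair⟩
  refine Set.Finite.subset ?_ hsub
  refine Set.Finite.biUnion L.finite_toSet fun ℓ₁ _ =>
    Set.Finite.biUnion L.finite_toSet fun ℓ₂ _ => ?_
  by_cases h : LinearIndependent ℝ ![ℓ₁.v, ℓ₂.v]
  · refine Set.Subsingleton.finite (fun a ha b hb => pair_inter_subsingleton h ha.1 hb.1)
  · convert Set.finite_empty
    ext x; simp [h]

end Geom

lemma eq_C_of_totalDegree_eq_zero' {n : ℕ} {p : MvPolynomial (Fin n) ℝ}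
    (h : p.totalDegree = 0) : p = C (coeff 0 p) := by
  ext d
  by_cases hd : d = 0
  · subst hd; simp
  · rw [coeff_C, if_neg (Ne.symm hd)]
    by_contra hc
    have hmem : d ∈ p.support := mem_support_iff.mpr hc
    have hle := le_totalDegree hmem
    rw [h, Nat.le_zero, Finsupp.sum] at hle
    refine hd ?_
    ext i
    by_cases hi : i ∈ d.support
    · simpa using Finset.sum_eq_zero_iff.mp hle i hi
    · simpa using Finsupp.notMem_support_iff.mp hi

theorem stmt_8 (n : ℕ) (hn : 2 ≤ n) :
    ∃ K : ℝ, 0 < K ∧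
      ∀ L : Finset (Line n), L.Nonempty → (joints L).Nonempty →
        ∃ ℓ ∈ L, ((joints L ∩ ℓ.carrier).ncard : ℝ) ≤
          K * ((joints L).ncard : ℝ) ^ ((1 : ℝ) / n) := by
  have hnpos : 0 < n := by omega
  refine ⟨2 * n + 1, by positivity, ?_⟩
  intro L hL hJne
  by_contra hcon
  push_neg at hcon
  classical
  set J := joints L with hJdef
  have hJfin : J.Finite := joints_finite hn L
  set N : ℕ := J.ncard with hNdef
  have hNpos : 0 < N := (Set.ncard_pos hJfin).mpr hJne
  have hNr1 : (1:ℝ) ≤ (N:ℝ) := by exact_mod_cast hNpos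
  set ρ : ℝ := (N:ℝ) ^ ((1:ℝ)/n) with hρdef
  have hρ1 : 1 ≤ ρ := Real.one_le_rpow hNr1 (by positivity)
  have hρpos : 0 < ρ := by linarith
  set m : ℕ := Nat.floor ρ + 1 with hmdef
  have hρm : ρ < (m : ℝ) := by
    rw [hmdef]; push_cast; exact Nat.lt_floor_add_one ρ
  have hmN : N < m ^ n := by
    have h1 : (N:ℝ) = ρ ^ n := by
      rw [hρdef, ← Real.rpow_natCast ((N:ℝ) ^ ((1:ℝ)/n)) n,
        ← Real.rpow_mul (by positivity), one_div,
        inv_mul_cancel₀ (by exact_mod_cast hnpos.ne'), Real.rpow_one]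
    have h2 : ρ ^ n < (m:ℝ) ^ n := pow_lt_pow_left₀ hρm (le_of_lt hρpos) (by omega)
    have h3 : (N:ℝ) < (m:ℝ) ^ n := h1 ▸ h2
    exact_mod_cast h3
  have hmρ : (m : ℝ) ≤ 2 * ρ := by
    have hf : ((Nat.floor ρ : ℕ) : ℝ) ≤ ρ := Nat.floor_le (le_of_lt hρpos)
    have hm' : (m:ℝ) = ((Nat.floor ρ : ℕ) : ℝ) + 1 := by rw [hmdef]; push_cast; ring
    linarith
  obtain ⟨p, hp0, hpd, hpv⟩ := exists_vanishing hJfin.toFinset m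
    (by rw [← Set.ncard_eq_toFinset_card _ hJfin]; exact hmN)
  have hQex : ∃ d : ℕ, ∃ p : MvPolynomial (Fin n) ℝ,
      p ≠ 0 ∧ p.totalDegree ≤ d ∧ ∀ x ∈ J, eval x p = 0 :=
    ⟨n * m, p, hp0, hpd, fun x hx => hpv x (hJfin.mem_toFinset.mpr hx)⟩
  set d₀ := Nat.find hQex with hd₀def
  obtain ⟨p₀, hp₀ne, hp₀deg, hp₀van⟩ := Nat.find_spec hQex
  have hdeg_eq : p₀.totalDegree = d₀ :=
    le_antisymm hp₀deg (Nat.find_min' hQex ⟨p₀, hp₀ne, le_refl _, hp₀van⟩)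
  have hd₀le : d₀ ≤ n * m :=
    Nat.find_min' hQex ⟨p, hp0, hpd, fun x hx => hpv x (hJfin.mem_toFinset.mpr hx)⟩
  obtain ⟨x₀, hx₀⟩ := hJne
  have hdeg_pos : 0 < p₀.totalDegree := by
    rcases Nat.eq_zero_or_pos p₀.totalDegree with h0 | h
    · exfalso
      have hC := eq_C_of_totalDegree_eq_zero' h0
      have hev := hp₀van x₀ hx₀
      rw [hC, eval_C] at hev
      exact hp₀ne (by rw [hC, hev, map_zero])
    · exact h
  -- every line of L contains more than deg p₀ joints
  have hcount : ∀ ℓ ∈ L, p₀.totalDegree < (J ∩ ℓ.carrier).ncard := by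
    intro ℓ hℓ
    have h1 := hcon ℓ hℓ
    have h2 : (p₀.totalDegree : ℝ) ≤ 2 * n * ρ := by
      calc (p₀.totalDegree:ℝ) ≤ ((n * m : ℕ) : ℝ) := by
            exact_mod_cast hp₀deg.trans hd₀le
        _ = (n:ℝ) * (m:ℝ) := by push_cast; ring
        _ ≤ (n:ℝ) * (2 * ρ) := by
            apply mul_le_mul_of_nonneg_left hmρ (by positivity)
        _ = 2 * n * ρ := by ring
    have h3 : (p₀.totalDegree : ℝ) < ((J ∩ ℓ.carrier).ncard : ℝ) := by
      have h4 : 2 * (n:ℝ) * ρ < (2 * n + 1) * ρ := by nlinarith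
      calc (p₀.totalDegree : ℝ) ≤ 2 * n * ρ := h2
        _ < (2 * n + 1) * ρ := h4
        _ < _ := h1
    exact_mod_cast h3
  -- p₀ vanishes identically on each line of L
  have hline : ∀ ℓ ∈ L, ∀ y ∈ ℓ.carrier, eval y p₀ = 0 := by
    intro ℓ hℓ y hy
    set q := restrictPoly ℓ.p ℓ.v p₀ with hqdef
    have hfin2 : (J ∩ ℓ.carrier).Finite := hJfin.subset Set.inter_subset_left
    set f : (Fin n → ℝ) → ℝ :=
      fun x => if h : x ∈ ℓ.carrier then Classical.choose h else 0 with hfdef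
    have hfspec : ∀ x ∈ ℓ.carrier, x = ℓ.p + f x • ℓ.v := by
      intro x hx
      rw [hfdef]
      simp only [dif_pos hx]
      exact Classical.choose_spec hx
    have hinj : Set.InjOn f hfin2.toFinset := by
      intro a ha b hb hab
      have ha' : a ∈ ℓ.carrier := (hfin2.mem_toFinset.mp ha).2
      have hb' : b ∈ ℓ.carrier := (hfin2.mem_toFinset.mp hb).2
      rw [hfspec a ha', hfspec b hb', hab]
    set T : Finset ℝ := hfin2.toFinset.image f with hTdef
    have hcardT : T.card = (J ∩ ℓ.carrier).ncard := by
      rw [hTdef, Finset.card_image_of_injOn hinj, Set.ncard_eq_toFinset_card _ hfin2]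
    have hq0 : q = 0 := by
      apply Polynomial.eq_zero_of_natDegree_lt_card_of_eval_eq_zero' q T
      · intro t ht
        obtain ⟨x, hx, rfl⟩ := Finset.mem_image.mp ht
        have hxJ : x ∈ J ∩ ℓ.carrier := hfin2.mem_toFinset.mp hx
        rw [hqdef, eval_restrictPoly, ← hfspec x hxJ.2]
        exact hp₀van x hxJ.1
      · rw [hcardT]
        exact lt_of_le_of_lt (natDegree_restrictPoly_le _ _ _) (hcount ℓ hℓ)
    obtain ⟨t, rfl⟩ := hy
    have he := eval_restrictPoly ℓ.p ℓ.v p₀ t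
    rw [← he, ← hqdef, hq0, Polynomial.eval_zero]
  -- all partial derivatives of p₀ vanish on J
  have hgrad : ∀ x ∈ J, ∀ j, eval x (pderiv j p₀) = 0 := by
    intro x hx j
    obtain ⟨g, hgL, hgx, hind⟩ := hx
    have hdir : ∀ i, ∑ k, (g i).v k * eval x (pderiv k p₀) = 0 := by
      intro i
      have hr : restrictPoly x (g i).v p₀ = 0 := by
        apply Polynomial.funext
        intro t
        rw [eval_restrictPoly, Polynomial.eval_zero]
        obtain ⟨t₀, hx0⟩ := hgx i
        have hmem : x + t • (g i).v ∈ (g i).carrier := ⟨t₀ + t, by rw [hx0]; module⟩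
        exact hline (g i) (hgL i) _ hmem
      have hco := coeff_one_restrictPoly x (g i).v p₀
      rw [hr] at hco
      simpa using hco.symm
    haveI : Nonempty (Fin n) := ⟨⟨0, by omega⟩⟩
    let G : (Fin n → ℝ) →ₗ[ℝ] ℝ :=
      { toFun := fun w => ∑ k, w k * eval x (pderiv k p₀)
        map_add' := by intro a b; simp [add_mul, Finset.sum_add_distrib]
        map_smul' := by intro r a; simp [Finset.mul_sum, mul_assoc]  }
    have hGzero : ∀ w, G w = 0 := by
      have hspan : Submodule.span ℝ (Set.range fun i => (g i).v) = ⊤ :=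
        hind.span_eq_top_of_card_eq_finrank (by simp)
      intro w
      have hw : w ∈ Submodule.span ℝ (Set.range fun i => (g i).v) := by
        rw [hspan]; exact Submodule.mem_top
      refine Submodule.span_induction ?_ ?_ ?_ ?_ hw
      · rintro u ⟨i, rfl⟩
        exact hdir i
      · simp [G]
      · intro a b _ _ ha hb
        rw [map_add, ha, hb, add_zero]
      · intro r a _ h
        rw [map_smul, h, smul_zero]
    have hG := hGzero (Pi.single j 1)
    simp only [G, LinearMap.coe_mk, AddHom.coe_mk] at hG
    rw [Finset.sum_eq_single j (fun b _ hb => by simp [Pi.single_eq_of_ne hb])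
      (by simp)] at hG
    simpa using hG
  obtain ⟨j, hj⟩ := exists_pderiv_ne_zero hp₀ne hdeg_pos
  have hlt := totalDegree_pderiv_lt hdeg_pos j
  have hQd : ∃ p : MvPolynomial (Fin n) ℝ,
      p ≠ 0 ∧ p.totalDegree ≤ d₀ - 1 ∧ ∀ x ∈ J, eval x p = 0 :=
    ⟨pderiv j p₀, hj, by omega, fun x hx => hgrad x hx j⟩
  have hd₀pos : 1 ≤ d₀ := hdeg_eq ▸ hdeg_pos
  exact Nat.find_min hQex (show d₀ - 1 < d₀ by omega) hQd
end

section
/- (Joints theorem for polynomial curves) Let 𝓒 be a finite collection of smooth curves in ℝ^n, each parametrized by polynomials of degree at most d. Then the number of joints of 𝓒 (points where n curves of 𝓒 meet with linearly independent tangent vectors) is at most C_n · |𝓒|^(n/(n-1)) · d^(n/(n-1)), for a constant C_n depending only on n. -/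
open MvPolynomial

/-- A polynomially parametrized curve in ℝⁿ. -/
structure PolyCurve (n : ℕ) where
  P : Fin n → Polynomial ℝ

/-- The point of the curve at parameter `t`. -/
def PolyCurve.eval {n : ℕ} (γ : PolyCurve n) (t : ℝ) : Fin n → ℝ :=
  fun i => (γ.P i).eval t

/-- The tangent vector of the curve at parameter `t`. -/
noncomputable def PolyCurve.tangent {n : ℕ} (γ : PolyCurve n) (t : ℝ) : Fin n → ℝ :=
  fun i => (Polynomial.derivative (γ.P i)).eval t

/-- The curve is smooth: its tangent vector never vanishes. -/
def PolyCurve.Smooth {n : ℕ} (γ : PolyCurve n) : Prop :=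
  ∀ t : ℝ, γ.tangent t ≠ 0

/-- All coordinate polynomials have degree at most `d`. -/
def PolyCurve.DegLE {n : ℕ} (γ : PolyCurve n) (d : ℕ) : Prop :=
  ∀ i, (γ.P i).natDegree ≤ d

/-- The set of points of the curve. -/
def PolyCurve.carrier {n : ℕ} (γ : PolyCurve n) : Set (Fin n → ℝ) :=
  {x | ∃ t : ℝ, γ.eval t = x}

/-- `x` is a joint of the collection of curves `𝓒`: there are `n` curves of `𝓒`
passing through `x` whose tangent vectors at `x` are linearly independent. -/
def IsCurveJoint {n : ℕ} (𝓒 : Finset (PolyCurve n)) (x : Fin n → ℝ) : Prop :=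
  ∃ (g : Fin n → PolyCurve n) (τ : Fin n → ℝ),
    (∀ i, g i ∈ 𝓒) ∧ (∀ i, (g i).eval (τ i) = x) ∧
      LinearIndependent ℝ (fun i => (g i).tangent (τ i))

lemma polyEval_aeval {n : ℕ} (p : Fin n → Polynomial ℝ) (g : MvPolynomial (Fin n) ℝ) (t : ℝ) :
    (MvPolynomial.aeval p g).eval t = MvPolynomial.eval (fun i => (p i).eval t) g := by
  induction g using MvPolynomial.induction_on with
  | C a => simp
  | add f g hf hg => simp [hf, hg]
  | mul_X f i hf => simp [hf]

lemma deriv_aeval {n : ℕ} (p : Fin n → Polynomial ℝ) (g : MvPolynomial (Fin n) ℝ) :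
    Polynomial.derivative (MvPolynomial.aeval p g) =
      ∑ j, MvPolynomial.aeval p (MvPolynomial.pderiv j g) * Polynomial.derivative (p j) := by
  induction g using MvPolynomial.induction_on with
  | C a => simp
  | add f g hf hg =>
      simp only [map_add, add_mul, Finset.sum_add_distrib, hf, hg]
  | mul_X f i hf =>
      have hX : ∀ j : Fin n, MvPolynomial.pderiv j (f * X i)
          = MvPolynomial.pderiv j f * X i + f * MvPolynomial.pderiv j (X i) := by
        intro j; rw [MvPolynomial.pderiv_mul]
      simp only [hX, map_add, map_mul, aeval_X, add_mul, Finset.sum_add_distrib]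
      rw [Polynomial.derivative_mul, hf, Finset.sum_mul]
      refine congrArg₂ (· + ·) ?_ ?_
      · apply Finset.sum_congr rfl; intro j _; ring
      · rw [Finset.sum_eq_single i]
        · rw [MvPolynomial.pderiv_X_self]; simp [mul_comm]
        · intro j _ hj
          rw [MvPolynomial.pderiv_X_of_ne (Ne.symm hj)]
          simp
        · simp

lemma natDegree_aeval_le {n d : ℕ} (p : Fin n → Polynomial ℝ) (hp : ∀ i, (p i).natDegree ≤ d)
    (g : MvPolynomial (Fin n) ℝ) :
    (MvPolynomial.aeval p g).natDegree ≤ g.totalDegree * d := by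
  rw [MvPolynomial.aeval_def, MvPolynomial.eval₂_eq]
  apply Polynomial.natDegree_sum_le_of_forall_le
  intro m hm
  calc (algebraMap ℝ (Polynomial ℝ) (MvPolynomial.coeff m g) *
        ∏ i ∈ m.support, p i ^ m i).natDegree
      ≤ (algebraMap ℝ (Polynomial ℝ) (MvPolynomial.coeff m g)).natDegree
        + (∏ i ∈ m.support, p i ^ m i).natDegree := Polynomial.natDegree_mul_le
    _ ≤ 0 + ∑ i ∈ m.support, (p i ^ m i).natDegree := by
        gcongr
        · exact Polynomial.natDegree_C _ |>.le
        · exact Polynomial.natDegree_prod_le _ _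
    _ ≤ ∑ i ∈ m.support, m i * d := by
        rw [zero_add]
        apply Finset.sum_le_sum
        intro i _
        exact (Polynomial.natDegree_pow_le).trans (Nat.mul_le_mul_left _ (hp i))
    _ = (∑ i ∈ m.support, m i) * d := by rw [Finset.sum_mul]
    _ ≤ g.totalDegree * d := by
        apply Nat.mul_le_mul_right
        exact MvPolynomial.le_totalDegree hm

lemma pderiv_as_sum {n : ℕ} (i : Fin n) (g : MvPolynomial (Fin n) ℝ) :
    MvPolynomial.pderiv i g =
      ∑ s ∈ g.support, MvPolynomial.monomial (s - Finsupp.single i 1) (g.coeff s * s i) := by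
  conv_lhs => rw [g.as_sum]
  rw [map_sum]
  exact Finset.sum_congr rfl fun s _ => MvPolynomial.pderiv_monomial

lemma mem_support_pderiv {n : ℕ} {i : Fin n} {g : MvPolynomial (Fin n) ℝ}
    {m : Fin n →₀ ℕ} (hm : m ∈ (MvPolynomial.pderiv i g).support) :
    ∃ s ∈ g.support, s i ≠ 0 ∧ m = s - Finsupp.single i 1 := by
  classical
  rw [pderiv_as_sum] at hm
  obtain ⟨s, hs, hms⟩ := Finset.mem_biUnion.mp (MvPolynomial.support_sum hm)
  refine ⟨s, hs, ?_, Finset.mem_singleton.mp (MvPolynomial.support_monomial_subset hms)⟩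
  intro h0
  simp [h0, MvPolynomial.support_monomial] at hms

lemma sub_single_sum_lt {n : ℕ} (s : Fin n →₀ ℕ) (i : Fin n) (hsi : s i ≠ 0) :
    ((s - Finsupp.single i 1).sum fun _ e => e) < s.sum fun _ e => e := by
  classical
  have happ : ∀ j, (s - Finsupp.single i 1 : Fin n →₀ ℕ) j = s j - (Finsupp.single i 1 : Fin n →₀ ℕ) j :=
    fun j => Finsupp.tsub_apply s (Finsupp.single i 1) j
  calc ((s - Finsupp.single i 1).sum fun _ e => e)
      = ∑ j ∈ s.support, (s - Finsupp.single i 1 : Fin n →₀ ℕ) j := by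
        apply Finsupp.sum_of_support_subset
        · exact Finsupp.support_tsub
        · intros; rfl
    _ < ∑ j ∈ s.support, s j := by
        apply Finset.sum_lt_sum
        · intro j _; rw [happ]; omega
        · refine ⟨i, Finsupp.mem_support_iff.mpr hsi, ?_⟩
          rw [happ, Finsupp.single_apply, if_pos rfl]
          omega
    _ = s.sum fun _ e => e := rfl

lemma totalDegree_pderiv_lt_s16 {n : ℕ} (i : Fin n) (g : MvPolynomial (Fin n) ℝ)
    (h : MvPolynomial.pderiv i g ≠ 0) :
    (MvPolynomial.pderiv i g).totalDegree < g.totalDegree := by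
  classical
  have key : ∀ m ∈ (MvPolynomial.pderiv i g).support, (m.sum fun _ e => e) < g.totalDegree := by
    intro m hm
    obtain ⟨s, hs, hsi, rfl⟩ := mem_support_pderiv hm
    exact lt_of_lt_of_le (sub_single_sum_lt s i hsi) (MvPolynomial.le_totalDegree hs)
  rw [MvPolynomial.totalDegree]
  apply (Finset.sup_lt_iff ?_).mpr key
  rw [bot_eq_zero]
  obtain ⟨m, hm⟩ := MvPolynomial.support_nonempty.mpr h
  obtain ⟨s, hs, hsi, _⟩ := mem_support_pderiv hm
  have h2 : s i ≤ s.sum fun _ e => e :=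
    Finset.single_le_sum (f := fun j => s j) (fun _ _ => Nat.zero_le _)
      (Finsupp.mem_support_iff.mpr hsi)
  exact lt_of_lt_of_le (Nat.pos_of_ne_zero (fun h0 => hsi (by omega))) (h2.trans (MvPolynomial.le_totalDegree hs))


lemma exists_pderiv_ne_zero' {n : ℕ} (g : MvPolynomial (Fin n) ℝ)
    (h : 0 < g.totalDegree) : ∃ i, MvPolynomial.pderiv i g ≠ 0 := by
  classical
  have hne : g.support.Nonempty := by
    rw [MvPolynomial.support_nonempty]
    intro h0
    simp [h0] at h
  obtain ⟨s, hs, hsup⟩ := Finset.exists_mem_eq_sup g.support hne (fun m => m.sum fun _ e => e)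
  rw [MvPolynomial.totalDegree, hsup] at h
  have hsum : 0 < s.sum fun _ e => e := h
  have : ∃ i, s i ≠ 0 := by
    by_contra hc
    push_neg at hc
    have : (s.sum fun _ e => e) = 0 := by
      apply Finset.sum_eq_zero
      intro j hj
      exact hc j
    omega
  obtain ⟨i, hi⟩ := this
  refine ⟨i, ?_⟩
  intro h0
  have hc : (MvPolynomial.pderiv i g).coeff (s - Finsupp.single i 1) = g.coeff s * s i := by
    rw [pderiv_as_sum]
    rw [MvPolynomial.coeff_sum]
    rw [Finset.sum_eq_single_of_mem s hs]
    · rw [MvPolynomial.coeff_monomial, if_pos rfl]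
    · intro s' hs' hne'
      rw [MvPolynomial.coeff_monomial]
      by_cases h1 : s' i = 0
      · simp [h1]
      · rw [if_neg]
        intro heq
        apply hne'
        ext j
        have e1 := Finsupp.tsub_apply s' (Finsupp.single i 1) j
        have e2 := Finsupp.tsub_apply s (Finsupp.single i 1) j
        have e3 : (s' - Finsupp.single i 1 : Fin n →₀ ℕ) j
            = (s - Finsupp.single i 1 : Fin n →₀ ℕ) j := by rw [heq]
        rw [e1, e2] at e3
        by_cases hj : j = i
        · subst hj
          rw [Finsupp.single_apply, if_pos rfl] at e3
          omega
        · rw [Finsupp.single_apply, if_neg (fun hh => hj hh.symm)] at e3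
          omega
  rw [h0] at hc
  simp only [MvPolynomial.coeff_zero] at hc
  have hcs : g.coeff s ≠ 0 := MvPolynomial.mem_support_iff.mp hs
  have : (s i : ℝ) = 0 := by
    rcases mul_eq_zero.mp hc.symm with h' | h'
    · exact absurd h' hcs
    · exact h'
  exact hi (by exact_mod_cast this)

lemma my_eq_C_of_totalDegree_eq_zero {n : ℕ} (g : MvPolynomial (Fin n) ℝ)
    (h : g.totalDegree = 0) : g = MvPolynomial.C (g.coeff 0) := by
  classical
  have hsupp := (MvPolynomial.totalDegree_eq_zero_iff (Fin n) g).mp h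
  ext m
  by_cases hm : m = 0
  · subst hm; simp
  · rw [MvPolynomial.coeff_C, if_neg (fun hh => hm hh.symm)]
    by_contra hc
    have hms : m ∈ g.support := MvPolynomial.mem_support_iff.mpr hc
    apply hm
    ext x
    exact hsupp m hms x

lemma exists_vanishing_poly {n : ℕ} (hn : 0 < n) (S : Finset (Fin n → ℝ)) (D : ℕ)
    (hcard : S.card < (D + 1) ^ n) :
    ∃ g : MvPolynomial (Fin n) ℝ, g ≠ 0 ∧ g.totalDegree ≤ n * D ∧
      ∀ x ∈ S, MvPolynomial.eval x g = 0 := by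
  classical
  -- index type for monomials
  set ι := Fin n → Fin (D + 1) with hι
  -- the finsupp associated to an index
  let tf : ι → (Fin n →₀ ℕ) := fun a => Finsupp.equivFunOnFinite.symm (fun i => (a i : ℕ))
  have tf_inj : Function.Injective tf := by
    intro a b hab
    funext i
    have h2 : (fun i => (a i : ℕ)) = (fun i => (b i : ℕ)) :=
      Finsupp.equivFunOnFinite.symm.injective hab
    exact Fin.ext (congrFun h2 i)
  -- linear map from coefficient vectors to polynomials
  let Φ : ((ι → ℝ)) →ₗ[ℝ] MvPolynomial (Fin n) ℝ :=
    ∑ a : ι, (MvPolynomial.monomial (tf a)).comp (LinearMap.proj a)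
  have Φ_apply : ∀ c : ι → ℝ, Φ c = ∑ a : ι, MvPolynomial.monomial (tf a) (c a) := by
    intro c
    simp [Φ, LinearMap.sum_apply]
  -- evaluation map
  let E : MvPolynomial (Fin n) ℝ →ₗ[ℝ] (S → ℝ) :=
    LinearMap.pi (fun x => (MvPolynomial.aeval ((x : Fin n → ℝ))).toLinearMap)
  have hrank : Module.finrank ℝ (S → ℝ) < Module.finrank ℝ (ι → ℝ) := by
    rw [Module.finrank_pi, Module.finrank_pi]
    simpa [ι, Fintype.card_coe] using hcard
  have hnotinj : ¬ Function.Injective (E.comp Φ) := by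
    intro hinj
    have := LinearMap.finrank_le_finrank_of_injective hinj
    omega
  have : ∃ c : ι → ℝ, c ≠ 0 ∧ (E.comp Φ) c = 0 := by
    by_contra hc
    push_neg at hc
    apply hnotinj
    rw [← LinearMap.ker_eq_bot, Submodule.eq_bot_iff]
    intro c hcmem
    by_contra hc0
    exact (hc c hc0) (LinearMap.mem_ker.mp hcmem)
  obtain ⟨c, hc0, hker⟩ := this
  refine ⟨Φ c, ?_, ?_, ?_⟩
  · -- Φ is injective
    intro h0
    apply hc0
    funext a
    have : (Φ c).coeff (tf a) = c a := by
      rw [Φ_apply, MvPolynomial.coeff_sum]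
      rw [Finset.sum_eq_single_of_mem a (Finset.mem_univ a)]
      · rw [MvPolynomial.coeff_monomial, if_pos rfl]
      · intro b _ hba
        rw [MvPolynomial.coeff_monomial, if_neg (fun h => hba (tf_inj h))]
    rw [h0] at this
    simpa using this.symm
  · rw [Φ_apply]
    apply MvPolynomial.totalDegree_finsetSum_le
    intro a _
    apply (MvPolynomial.totalDegree_monomial_le _ _).trans
    have heq : ((tf a).sum fun _ e => id e) = ∑ i : Fin n, ((a i : ℕ)) := by
      rw [Finsupp.sum_of_support_subset _ (Finset.subset_univ _)]
      · apply Finset.sum_congr rfl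
        intro i _
        rfl
      · intros; rfl
    rw [heq]
    calc ∑ i : Fin n, ((a i : ℕ)) ≤ ∑ _i : Fin n, D := by
          apply Finset.sum_le_sum
          intro i _
          exact Nat.lt_succ_iff.mp (a i).isLt
      _ = n * D := by simp [Finset.sum_const, smul_eq_mul]
  · intro x hx
    have := congrFun hker ⟨x, hx⟩
    simp only [LinearMap.comp_apply, Pi.zero_apply] at this
    have h2 : MvPolynomial.aeval (x : Fin n → ℝ) (Φ c) = 0 := this
    have h3 : MvPolynomial.eval (x : Fin n → ℝ) (Φ c) = MvPolynomial.aeval (x : Fin n → ℝ) (Φ c) :=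
      (RingHom.congr_fun (MvPolynomial.coe_aeval_eq_eval (x : Fin n → ℝ)) (Φ c)).symm
    rw [h3, h2]

open Classical in
lemma core_lemma {n d : ℕ} (hn : 0 < n) (𝓒 : Finset (PolyCurve n))
    (hdeg : ∀ γ ∈ 𝓒, γ.DegLE d)
    (S : Finset (Fin n → ℝ)) (hS : ∀ x ∈ S, IsCurveJoint 𝓒 x) (hne : S.Nonempty) :
    ∀ k : ℕ, ∀ g : MvPolynomial (Fin n) ℝ, g ≠ 0 →
      (∀ x ∈ S, MvPolynomial.eval x g = 0) → g.totalDegree ≤ k →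
      ∃ γ ∈ 𝓒, (S.filter (fun x => x ∈ γ.carrier)).card ≤ g.totalDegree * d := by
  classical
  intro k
  induction k using Nat.strong_induction_on with
  | _ k IH =>
  intro g hg hvan hdk
  by_contra hcon
  push_neg at hcon
  -- Step 1 : g vanishes on each curve of 𝓒 (as a polynomial in t)
  have step1 : ∀ γ ∈ 𝓒, MvPolynomial.aeval γ.P g = 0 := by
    intro γ hγ
    set F := S.filter (fun x => x ∈ γ.carrier) with hF
    have hcount : g.totalDegree * d < F.card := hcon γ hγ
    set par : (Fin n → ℝ) → ℝ := fun x =>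
      if h : ∃ t : ℝ, γ.eval t = x then h.choose else 0 with hpar
    have hpar_spec : ∀ x ∈ F, γ.eval (par x) = x := by
      intro x hx
      have hx' : ∃ t : ℝ, γ.eval t = x := (Finset.mem_filter.mp hx).2
      show γ.eval (if h : ∃ t : ℝ, γ.eval t = x then h.choose else 0) = x
      rw [dif_pos hx']
      exact hx'.choose_spec
    have hinj : Set.InjOn par F := by
      intro x hx y hy hxy
      rw [← hpar_spec x hx, ← hpar_spec y hy, hxy]
    set T := F.image par with hT
    have hTcard : T.card = F.card := Finset.card_image_of_injOn hinj
    apply Polynomial.eq_zero_of_natDegree_lt_card_of_eval_eq_zero' _ T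
    · intro t ht
      obtain ⟨x, hxF, rfl⟩ := Finset.mem_image.mp ht
      rw [polyEval_aeval]
      have : (fun i => (γ.P i).eval (par x)) = γ.eval (par x) := rfl
      rw [this, hpar_spec x hxF]
      exact hvan x (Finset.mem_filter.mp hxF).1
    · rw [hTcard]
      exact lt_of_le_of_lt (natDegree_aeval_le γ.P (hdeg γ hγ) g) hcount
  -- Step 2 : the gradient of g vanishes on S
  have step2 : ∀ x ∈ S, ∀ j : Fin n, MvPolynomial.eval x (MvPolynomial.pderiv j g) = 0 := by
    intro x hx j
    obtain ⟨cg, τ, hmem, hevalx, hli⟩ := hS x hx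
    -- for each i, the derivative of g ∘ (cg i) vanishes
    have hzero : ∀ i : Fin n,
        ∑ l : Fin n, MvPolynomial.eval x (MvPolynomial.pderiv l g) * (cg i).tangent (τ i) l
          = 0 := by
      intro i
      have h1 : MvPolynomial.aeval (cg i).P g = 0 := step1 (cg i) (hmem i)
      have h2 := deriv_aeval (cg i).P g
      rw [h1, map_zero] at h2
      have h3 := congrArg (Polynomial.eval (τ i)) h2.symm
      rw [Polynomial.eval_zero] at h3  -- careful direction
      rw [Polynomial.eval_finset_sum] at h3
      rw [← h3]
      apply Finset.sum_congr rfl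
      intro l _
      rw [Polynomial.eval_mul, polyEval_aeval]
      have : (fun i' => ((cg i).P i').eval (τ i)) = (cg i).eval (τ i) := rfl
      rw [this, hevalx i]
      rfl
    -- tangents form a basis
    haveI : Nonempty (Fin n) := ⟨⟨0, hn⟩⟩
    have hcardeq : Fintype.card (Fin n) = Module.finrank ℝ (Fin n → ℝ) := by
      simp
    let b := basisOfLinearIndependentOfCardEqFinrank hli hcardeq
    have hb : ⇑b = fun i => (cg i).tangent (τ i) :=
      coe_basisOfLinearIndependentOfCardEqFinrank hli hcardeq
    let φ : (Fin n → ℝ) →ₗ[ℝ] ℝ :=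
      ∑ l : Fin n, MvPolynomial.eval x (MvPolynomial.pderiv l g) • LinearMap.proj l
    have hφ : ∀ y : Fin n → ℝ, φ y = ∑ l : Fin n,
        MvPolynomial.eval x (MvPolynomial.pderiv l g) * y l := by
      intro y
      simp [φ, LinearMap.sum_apply]
    have hφ0 : φ = 0 := by
      apply b.ext
      intro i
      rw [LinearMap.zero_apply]
      have : b i = (cg i).tangent (τ i) := by rw [hb]
      rw [this, hφ]
      exact hzero i
    have := congrArg (fun f : (Fin n → ℝ) →ₗ[ℝ] ℝ => f (Pi.single j 1)) hφ0
    simp only [LinearMap.zero_apply] at this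
    rw [hφ] at this
    rw [Finset.sum_eq_single j] at this
    · simpa using this
    · intro l _ hl
      simp [Pi.single_apply, if_neg hl]
    · simp
  -- Step 3 : g is not constant
  have hdpos : 0 < g.totalDegree := by
    rcases Nat.eq_zero_or_pos g.totalDegree with h0 | h
    · exfalso
      obtain ⟨x, hx⟩ := hne
      have hC := my_eq_C_of_totalDegree_eq_zero g h0
      have := hvan x hx
      rw [hC] at this
      rw [MvPolynomial.eval_C] at this
      apply hg
      rw [hC, this, map_zero]
    · exact h
  -- Step 4 : pass to a partial derivative, contradiction
  obtain ⟨j, hj⟩ := exists_pderiv_ne_zero' g hdpos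
  have hlt := totalDegree_pderiv_lt_s16 j g hj
  obtain ⟨γ, hγ, hle⟩ := IH (MvPolynomial.pderiv j g).totalDegree (lt_of_lt_of_le hlt hdk)
    (MvPolynomial.pderiv j g) hj (fun x hx => step2 x hx j) le_rfl
  have := hcon γ hγ
  have : g.totalDegree * d < (MvPolynomial.pderiv j g).totalDegree * d :=
    lt_of_lt_of_le this hle
  have := Nat.lt_of_mul_lt_mul_right this
  omega

open Classical in
lemma prune_lemma {n d : ℕ} (hn : 0 < n) :
    ∀ N : ℕ, ∀ 𝓒 : Finset (PolyCurve n), 𝓒.card ≤ N → (∀ γ ∈ 𝓒, γ.DegLE d) →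
    ∀ S : Finset (Fin n → ℝ), (∀ x ∈ S, IsCurveJoint 𝓒 x) →
    ∀ g : MvPolynomial (Fin n) ℝ, g ≠ 0 → (∀ x ∈ S, MvPolynomial.eval x g = 0) →
    S.card ≤ 𝓒.card * (g.totalDegree * d) := by
  intro N
  induction N with
  | zero =>
    intro 𝓒 hcard _ S hS g _ _
    have h𝓒 : 𝓒 = ∅ := Finset.card_eq_zero.mp (Nat.le_zero.mp hcard)
    have hSe : S = ∅ := by
      rw [Finset.eq_empty_iff_forall_notMem]
      intro x hx
      obtain ⟨cg, τ, hmem, _, _⟩ := hS x hx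
      have := hmem ⟨0, hn⟩
      rw [h𝓒] at this
      exact absurd this (Finset.notMem_empty _)
    simp [hSe]
  | succ N IH =>
    intro 𝓒 hcard hdeg S hS g hg hvan
    rcases S.eq_empty_or_nonempty with rfl | hne
    · simp
    have h𝓒ne : 𝓒.Nonempty := by
      obtain ⟨x, hx⟩ := hne
      obtain ⟨cg, _, hmem, _, _⟩ := hS x hx
      exact ⟨cg ⟨0, hn⟩, hmem ⟨0, hn⟩⟩
    obtain ⟨γ, hγ, hle⟩ := core_lemma hn 𝓒 hdeg S hS hne g.totalDegree g hg hvan le_rfl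
    set S' := S.filter (fun x => ¬ (x ∈ γ.carrier)) with hS'def
    set 𝓒' := 𝓒.erase γ with h𝓒'def
    have hcard' : 𝓒'.card ≤ N := by
      rw [h𝓒'def, Finset.card_erase_of_mem hγ]
      omega
    have hdeg' : ∀ γ' ∈ 𝓒', γ'.DegLE d := fun γ' hγ' => hdeg γ' (Finset.mem_of_mem_erase hγ')
    have hS'' : ∀ x ∈ S', IsCurveJoint 𝓒' x := by
      intro x hx
      obtain ⟨hxS, hxc⟩ := Finset.mem_filter.mp hx
      obtain ⟨cg, τ, hmem, hev, hli⟩ := hS x hxS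
      refine ⟨cg, τ, fun i => Finset.mem_erase.mpr ⟨?_, hmem i⟩, hev, hli⟩
      intro heq
      exact hxc ⟨τ i, by rw [← heq]; exact hev i⟩
    have hIH := IH 𝓒' hcard' hdeg' S' hS'' g hg
      (fun x hx => hvan x (Finset.mem_filter.mp hx).1)
    have hsplit : (S.filter (fun x => x ∈ γ.carrier)).card + S'.card = S.card :=
      Finset.card_filter_add_card_filter_not _
    have h1 : 𝓒'.card = 𝓒.card - 1 := Finset.card_erase_of_mem hγ
    have h2 : 1 ≤ 𝓒.card := Finset.card_pos.mpr h𝓒ne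
    have h3 : S'.card ≤ 𝓒'.card * (g.totalDegree * d) := hIH
    calc S.card = (S.filter (fun x => x ∈ γ.carrier)).card + S'.card := hsplit.symm
      _ ≤ g.totalDegree * d + 𝓒'.card * (g.totalDegree * d) := by
          apply Nat.add_le_add hle h3
      _ = (1 + 𝓒'.card) * (g.totalDegree * d) := by ring
      _ = 𝓒.card * (g.totalDegree * d) := by rw [h1]; congr 1; omega

theorem stmt_16 (n : ℕ) (hn : 2 ≤ n) :
    ∃ C : ℝ, 0 < C ∧
      ∀ (d : ℕ) (𝓒 : Finset (PolyCurve n)),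
        (∀ γ ∈ 𝓒, γ.Smooth ∧ γ.DegLE d) →
        (({x | IsCurveJoint 𝓒 x}).ncard : ℝ) ≤
          C * (𝓒.card : ℝ) ^ ((n : ℝ) / (n - 1)) * (d : ℝ) ^ ((n : ℝ) / (n - 1)) := by
  classical
  have hn0 : 0 < n := by omega
  have hnR : (2:ℝ) ≤ (n:ℝ) := by exact_mod_cast hn
  have hn1R : (1:ℝ) ≤ (n:ℝ) - 1 := by linarith
  set e : ℝ := (n : ℝ) / ((n:ℝ) - 1) with hedef
  have he0 : 0 < e := by
    apply div_pos <;> linarith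
  have he2 : e ≤ 2 := by
    rw [hedef, div_le_iff₀ (by linarith)]
    linarith
  refine ⟨(n:ℝ)^2, by positivity, ?_⟩
  intro d 𝓒 h𝓒
  have hRHSnn : 0 ≤ (𝓒.card : ℝ) ^ e * (d : ℝ) ^ e := by positivity
  rcases Set.finite_or_infinite {x | IsCurveJoint 𝓒 x} with hfin | hinf
  swap
  · rw [Set.Infinite.ncard hinf]
    push_cast
    nlinarith [Real.rpow_nonneg (Nat.cast_nonneg 𝓒.card) e,
      Real.rpow_nonneg (Nat.cast_nonneg d) e, sq_nonneg (n:ℝ)]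
  set S := hfin.toFinset with hSdef
  have hncard : ({x | IsCurveJoint 𝓒 x}).ncard = S.card := by
    rw [Set.ncard_eq_toFinset_card _ hfin]
  rw [hncard]
  set k := S.card with hkdef
  rcases Nat.eq_zero_or_pos k with hk0 | hkpos
  · rw [hk0]
    push_cast
    nlinarith [Real.rpow_nonneg (Nat.cast_nonneg 𝓒.card) e,
      Real.rpow_nonneg (Nat.cast_nonneg d) e, sq_nonneg (n:ℝ)]
  -- choose minimal D with k < (D+1)^n
  have hPk : k < (k + 1) ^ n := by
    calc k < k + 1 := Nat.lt_succ_self k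
      _ = (k+1)^1 := (pow_one _).symm
      _ ≤ (k+1)^n := Nat.pow_le_pow_right (by omega) (by omega)
  have hPex : ∃ D : ℕ, k < (D + 1) ^ n := ⟨k, hPk⟩
  set D := Nat.find hPex with hDdef
  have hD : k < (D + 1) ^ n := Nat.find_spec hPex
  have hD0 : D ≠ 0 := by
    intro h0
    have := hD
    rw [h0] at this
    simp at this
    omega
  have hDn : D ^ n ≤ k := by
    have hmin := Nat.find_min hPex (m := D - 1) (by omega)
    push_neg at hmin
    have : D - 1 + 1 = D := by omega
    rwa [this] at hmin
  -- vanishing polynomial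
  obtain ⟨g, hg, hgdeg, hgvan⟩ := exists_vanishing_poly hn0 S D hD
  have hSjoint : ∀ x ∈ S, IsCurveJoint 𝓒 x := by
    intro x hx
    rw [hSdef, Set.Finite.mem_toFinset] at hx
    exact hx
  have hprune := prune_lemma hn0 𝓒.card 𝓒 le_rfl (fun γ hγ => (h𝓒 γ hγ).2) S hSjoint g hg hgvan
  have hkle : k ≤ 𝓒.card * (n * D * d) := by
    calc k ≤ 𝓒.card * (g.totalDegree * d) := hprune
      _ ≤ 𝓒.card * (n * D * d) := by
          apply Nat.mul_le_mul_left
          exact Nat.mul_le_mul_right _ hgdeg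
  -- real algebra
  have hK1 : (1:ℝ) ≤ (k:ℝ) := by exact_mod_cast hkpos
  have hKpos : (0:ℝ) < (k:ℝ) := by linarith
  have hnne : (n:ℝ) ≠ 0 := by positivity
  have hDle : (D:ℝ) ≤ (k:ℝ) ^ ((1:ℝ)/n) := by
    have h1 : ((D:ℝ)) ^ (n:ℕ) ≤ (k:ℝ) := by exact_mod_cast hDn
    have h2 : ((D:ℝ) ^ (n:ℝ)) ≤ (k:ℝ) := by
      rwa [Real.rpow_natCast]
    calc (D:ℝ) = ((D:ℝ) ^ (n:ℝ)) ^ ((1:ℝ)/n) := by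
          rw [← Real.rpow_mul (Nat.cast_nonneg D), mul_one_div, div_self hnne, Real.rpow_one]
      _ ≤ (k:ℝ) ^ ((1:ℝ)/n) := by
          apply Real.rpow_le_rpow (by positivity) h2 (by positivity)
  set A : ℝ := (n:ℝ) * 𝓒.card * d with hAdef
  have hA0 : 0 ≤ A := by positivity
  have hmain : (k:ℝ) ≤ A * (k:ℝ) ^ ((1:ℝ)/n) := by
    have h1 : (k:ℝ) ≤ (𝓒.card : ℝ) * ((n:ℝ) * D * d) := by exact_mod_cast hkle
    calc (k:ℝ) ≤ (𝓒.card : ℝ) * ((n:ℝ) * D * d) := h1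
      _ = ((n:ℝ) * 𝓒.card * d) * (D:ℝ) := by ring
      _ ≤ A * (k:ℝ) ^ ((1:ℝ)/n) := by
          rw [hAdef]
          apply mul_le_mul_of_nonneg_left hDle hA0
  have hfrac : (k:ℝ) ^ ((1:ℝ) - 1/n) ≤ A := by
    have hsplit : (k:ℝ) = (k:ℝ) ^ ((1:ℝ) - 1/n) * (k:ℝ) ^ ((1:ℝ)/n) := by
      rw [← Real.rpow_add hKpos]
      norm_num
    nth_rewrite 1 [hsplit] at hmain
    have hpow : (0:ℝ) < (k:ℝ) ^ ((1:ℝ)/n) := Real.rpow_pos_of_pos hKpos _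
    exact le_of_mul_le_mul_right hmain hpow
  have hexp : ((1:ℝ) - 1/n) * e = 1 := by
    rw [hedef]
    have h1 : (n:ℝ) - 1 ≠ 0 := by linarith
    field_simp
  have hfinal : (k:ℝ) ≤ A ^ e := by
    calc (k:ℝ) = ((k:ℝ) ^ ((1:ℝ) - 1/n)) ^ e := by
          rw [← Real.rpow_mul (le_of_lt hKpos), hexp, Real.rpow_one]
      _ ≤ A ^ e := Real.rpow_le_rpow (by positivity) hfrac (le_of_lt he0)
  have hAe : A ^ e = (n:ℝ) ^ e * (𝓒.card : ℝ) ^ e * (d:ℝ) ^ e := by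
    rw [hAdef, Real.mul_rpow (by positivity) (Nat.cast_nonneg d),
      Real.mul_rpow (Nat.cast_nonneg n) (Nat.cast_nonneg 𝓒.card)]
  have hne2 : (n:ℝ) ^ e ≤ (n:ℝ) ^ 2 := by
    have := Real.rpow_le_rpow_of_exponent_le (by linarith : (1:ℝ) ≤ (n:ℝ)) he2
    calc (n:ℝ) ^ e ≤ (n:ℝ) ^ (2:ℝ) := this
      _ = (n:ℝ) ^ 2 := by
          rw [show ((2:ℝ)) = ((2:ℕ):ℝ) by norm_num, Real.rpow_natCast]
  calc (k:ℝ) ≤ A ^ e := hfinal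
    _ = (n:ℝ) ^ e * ((𝓒.card : ℝ) ^ e * (d:ℝ) ^ e) := by rw [hAe]; ring
    _ ≤ (n:ℝ) ^ 2 * ((𝓒.card : ℝ) ^ e * (d:ℝ) ^ e) :=
        mul_le_mul_of_nonneg_right hne2 hRHSnn
    _ = (n:ℝ) ^ 2 * (𝓒.card : ℝ) ^ e * (d:ℝ) ^ e := by ring
end
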